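/- Majority-vote decoding of the unfolded flag-gadget circuit with R = (t+1)^2 repetitions (t ≥ 1) is fault-tolerant. Let (e_s, e_f) be an error configuration of total weight at most t and let P := F^c.mulVec e_s + e_f be the observed flag pattern; for b ∈ Fin ((t+1)^2) let P_b : Fin m → ZMod 2 be the b-th subpattern P (b, ·). Then: (a) the maximal multiplicity max over Q of |{b : P_b = Q}| is at least t+1; (b) for every Q attaining this maximal multiplicity there is a unique u : Fin w → ZMod 2 with wt(u) ≤ t and H.mulVec u = Q; and (c) for this u, defining corr(u) : Fin (w+1) → ZMod 2 by corr(u) j := Σ over i : Fin w with (i : ℕ) < (j : ℕ) of u i (sum in ZMod 2), the correction is fault-tolerant: writing x := D^c.mulVec e_s + corr(u), one has min(wt x, (w+1) − wt x) ≤ wt(e_s) + wt(e_f). -/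

import Mathlib

namespace Unfold

/-- The `R`-fold stack of an `m × w` matrix `H` over `ZMod 2`. -/
def stackMatrix (R m w : ℕ) (H : Matrix (Fin m) (Fin w) (ZMod 2)) :
    Matrix (Fin R × Fin m) (Fin w) (ZMod 2) :=
  fun p j => H p.2 j

/-- Lexicographic order on flag-qubit indices `Fin R × Fin m`. -/
def lexLt {R m : ℕ} (a b : Fin R × Fin m) : Prop :=
  a.1 < b.1 ∨ (a.1 = b.1 ∧ a.2 < b.2)

instance {R m : ℕ} (a b : Fin R × Fin m) : Decidable (lexLt a b) := by
  unfold lexLt; infer_instance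

/-- `truncFirst v k` is the indicator vector of the `k` smallest (in the lexicographic
order on `Fin R × Fin m`) nonzero coordinates of `v` (all of them if `k > wt v`). -/
def truncFirst {R m : ℕ} (v : Fin R × Fin m → ZMod 2) (k : ℕ) : Fin R × Fin m → ZMod 2 :=
  fun i =>
    if v i ≠ 0 ∧ (Finset.univ.filter fun j => v j ≠ 0 ∧ lexLt j i).card < k then 1 else 0

/-- The extended column sequence `F̃₀ = 0`, `F̃ᵢ = ` column `i` of the stack of `H` for
`1 ≤ i ≤ w`, `F̃_{w+1} = 0`. -/
def Ftil (R m w : ℕ) (H : Matrix (Fin m) (Fin w) (ZMod 2)) (i : Fin (w + 2)) :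
    Fin R × Fin m → ZMod 2 :=
  if h : 1 ≤ (i : ℕ) ∧ (i : ℕ) ≤ w then
    fun p => stackMatrix R m w H p ⟨(i : ℕ) - 1, by omega⟩
  else 0

/-- The unfolding block between `F̃ᵢ` and `F̃ᵢ₊₁`: the list of columns
`F̃ᵢ + [F̃ᵢ + F̃ᵢ₊₁][k]` for `k = 0, …, wt(F̃ᵢ + F̃ᵢ₊₁) − 1`. -/
def block (R m w : ℕ) (H : Matrix (Fin m) (Fin w) (ZMod 2)) (i : Fin (w + 1)) :
    List (Fin R × Fin m → ZMod 2) :=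
  (List.range (hammingNorm (Ftil R m w H i.castSucc + Ftil R m w H i.succ))).map
    fun k => Ftil R m w H i.castSucc + truncFirst (Ftil R m w H i.castSucc + Ftil R m w H i.succ) k

/-- The unfolded column sequence `c₀, …, c_L`: concatenation of the blocks followed by
the final zero column. -/
def cols (R m w : ℕ) (H : Matrix (Fin m) (Fin w) (ZMod 2)) :
    List (Fin R × Fin m → ZMod 2) :=
  ((List.finRange (w + 1)).flatMap fun i => block R m w H i) ++ [0]

/-- Number of syndrome-error locations, `L + 1`. -/
def N (R m w : ℕ) (H : Matrix (Fin m) (Fin w) (ZMod 2)) : ℕ := (cols R m w H).length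

/-- The physical parity-check matrix `F^c` whose `p`-th column is `c_p`. -/
def Fc (R m w : ℕ) (H : Matrix (Fin m) (Fin w) (ZMod 2)) :
    Matrix (Fin R × Fin m) (Fin (N R m w H)) (ZMod 2) :=
  fun r p => (cols R m w H).get p r

/-- `dpos i` is the index at which `F̃ᵢ` occurs as the `k = 0` element of its block,
i.e. the location of the data CNOT acting on data qubit `i`. -/
def dpos (R m w : ℕ) (H : Matrix (Fin m) (Fin w) (ZMod 2)) (i : Fin (w + 1)) : ℕ :=
  ∑ j ∈ Finset.univ.filter (fun j : Fin (w + 1) => j < i), (block R m w H j).length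

/-- The data-propagation matrix `D^c`: `D^c i p = 1` iff `p ≤ dᵢ`. -/
def Dc (R m w : ℕ) (H : Matrix (Fin m) (Fin w) (ZMod 2)) :
    Matrix (Fin (w + 1)) (Fin (N R m w H)) (ZMod 2) :=
  fun i p => if (p : ℕ) ≤ dpos R m w H i then 1 else 0

end Unfold



section Generic

lemma zmod2_eq_one_of_ne_zero : ∀ {x : ZMod 2}, x ≠ 0 → x = 1 := by decide

lemma zmod2_add_self (x : ZMod 2) : x + x = 0 := by revert x; decide

variable {ι : Type*} [Fintype ι]

lemma hammingNorm_add_le {M : Type*} [AddCommMonoid M] [DecidableEq M] (x y : ι → M) :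
    hammingNorm (x + y) ≤ hammingNorm x + hammingNorm y := by
  classical
  unfold hammingNorm
  refine le_trans (Finset.card_le_card ?_) (Finset.card_union_le _ _)
  intro i hi
  simp only [Finset.mem_filter, Finset.mem_union, Finset.mem_univ, true_and, Pi.add_apply] at *
  by_contra hc
  push_neg at hc
  rw [hc.1, hc.2, add_zero] at hi
  exact hi rfl

lemma hammingNorm_sum_le {M : Type*} [AddCommMonoid M] [DecidableEq M] {γ : Type*} (s : Finset γ)
    (f : γ → ι → M) : hammingNorm (∑ p ∈ s, f p) ≤ ∑ p ∈ s, hammingNorm (f p) := by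
  classical
  induction s using Finset.cons_induction with
  | empty => simp
  | cons a s ha ih =>
    rw [Finset.sum_cons, Finset.sum_cons]
    exact le_trans (hammingNorm_add_le _ _) (by omega)

lemma hammingNorm_single_le [DecidableEq ι] (a : ι) (c : ZMod 2) :
    hammingNorm (Pi.single a c : ι → ZMod 2) ≤ 1 := by
  unfold hammingNorm
  refine le_trans (Finset.card_le_card (t := {a}) ?_) (by simp)
  intro i hi
  simp only [Finset.mem_filter, Finset.mem_singleton] at *
  by_contra hne
  have hne' : i ≠ a := hne
  exact hi.2 (show (Pi.single a c : ι → ZMod 2) i = 0 from Pi.single_eq_of_ne (M := fun _ => ZMod 2) hne' c)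

lemma hammingNorm_compl {n : ℕ} (x : Fin n → ZMod 2) :
    hammingNorm (fun i => x i + 1) = n - hammingNorm x := by
  unfold hammingNorm
  have h := Finset.card_filter_add_card_filter_not (s := (Finset.univ : Finset (Fin n)))
    (p := fun i => x i ≠ 0)
  have heq : (Finset.univ.filter fun i => x i + 1 ≠ 0) =
      (Finset.univ.filter fun i => ¬ x i ≠ 0) := by
    ext i
    simp only [Finset.mem_filter, Finset.mem_univ, true_and, not_not]
    constructor
    · intro h1
      by_contra h2
      rw [zmod2_eq_one_of_ne_zero h2] at h1
      exact h1 (by decide)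
    · intro h1; rw [h1]; decide
  rw [heq]
  simp only [Finset.card_univ, Fintype.card_fin] at h
  omega

/-- A monotone family of subsets of `T` takes at most `#T + 1` values. -/
lemma card_image_monotone_le {n : ℕ} {γ : Type*} [DecidableEq γ] (g : Fin n → Finset γ)
    (T : Finset γ) (hsub : ∀ b, g b ⊆ T) (hmono : ∀ b b', b ≤ b' → g b ⊆ g b') :
    (Finset.univ.image g).card ≤ T.card + 1 := by
  classical
  have hinj : ∀ A ∈ Finset.univ.image g, ∀ B ∈ Finset.univ.image g,
      A.card = B.card → A = B := by
    intro A hA B hB hcard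
    simp only [Finset.mem_image, Finset.mem_univ, true_and] at hA hB
    obtain ⟨b, rfl⟩ := hA; obtain ⟨b', rfl⟩ := hB
    rcases le_total b b' with h | h
    · exact Finset.eq_of_subset_of_card_le (hmono _ _ h) (le_of_eq hcard.symm)
    · exact (Finset.eq_of_subset_of_card_le (hmono _ _ h) (le_of_eq hcard)).symm
  have hinj' : ((Finset.univ.image g) : Set (Finset γ)).InjOn Finset.card := by
    intro A hA B hB h
    exact hinj A (by simpa using hA) B (by simpa using hB) h
  have hmaps : ∀ A ∈ Finset.univ.image g, A.card ∈ Finset.range (T.card + 1) := by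
    intro A hA
    simp only [Finset.mem_image, Finset.mem_univ, true_and] at hA
    obtain ⟨b, rfl⟩ := hA
    simp only [Finset.mem_range]
    exact Nat.lt_succ_of_le (Finset.card_le_card (hsub b))
  calc (Finset.univ.image g).card ≤ (Finset.range (T.card + 1)).card :=
        Finset.card_le_card_of_injOn _ hmaps hinj'
    _ = T.card + 1 := by simp

end Generic


namespace Unfold

/-! ### Auxiliary columns over `Fin m` -/

def FtH (m w : ℕ) (H : Matrix (Fin m) (Fin w) (ZMod 2)) (i : Fin (w + 2)) : Fin m → ZMod 2 :=
  if h : 1 ≤ (i : ℕ) ∧ (i : ℕ) ≤ w then fun j => H j ⟨(i : ℕ) - 1, by omega⟩ else 0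

lemma Ftil_apply (R m w : ℕ) (H : Matrix (Fin m) (Fin w) (ZMod 2)) (i : Fin (w + 2))
    (q : Fin R × Fin m) : Ftil R m w H i q = FtH m w H i q.2 := by
  unfold Ftil FtH stackMatrix
  split <;> rfl

def uvec (w : ℕ) (i : Fin (w + 2)) : Fin w → ZMod 2 :=
  if h : 1 ≤ (i : ℕ) ∧ (i : ℕ) ≤ w then Pi.single ⟨(i : ℕ) - 1, by omega⟩ 1 else 0

lemma FtH_eq_mulVec (m w : ℕ) (H : Matrix (Fin m) (Fin w) (ZMod 2)) (i : Fin (w + 2)) :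
    FtH m w H i = H.mulVec (uvec w i) := by
  unfold FtH uvec
  split
  · funext j
    rw [Matrix.mulVec_single]
    simp
  · rw [Matrix.mulVec_zero]

lemma uvec_norm_le (w : ℕ) (i : Fin (w + 2)) : hammingNorm (uvec w i) ≤ 1 := by
  unfold uvec
  split
  · exact hammingNorm_single_le _ _
  · simp

def vblkH (m w : ℕ) (H : Matrix (Fin m) (Fin w) (ZMod 2)) (i : Fin (w + 1)) : Fin m → ZMod 2 :=
  FtH m w H i.castSucc + FtH m w H i.succ

def sblk (m w : ℕ) (H : Matrix (Fin m) (Fin w) (ZMod 2)) (i : Fin (w + 1)) : ℕ :=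
  hammingNorm (vblkH m w H i)

def duvec (w : ℕ) (i : Fin (w + 1)) : Fin w → ZMod 2 :=
  uvec w i.castSucc + uvec w i.succ

lemma vblkH_eq_mulVec (m w : ℕ) (H : Matrix (Fin m) (Fin w) (ZMod 2)) (i : Fin (w + 1)) :
    vblkH m w H i = H.mulVec (duvec w i) := by
  unfold vblkH duvec
  rw [FtH_eq_mulVec, FtH_eq_mulVec, Matrix.mulVec_add]

lemma duvec_norm_le (w : ℕ) (i : Fin (w + 1)) : hammingNorm (duvec w i) ≤ 2 := by
  refine le_trans (hammingNorm_add_le _ _) ?_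
  have := uvec_norm_le w i.castSucc
  have := uvec_norm_le w i.succ
  omega

lemma uvec_apply (w : ℕ) (i : Fin (w + 2)) (j : Fin w) :
    uvec w i j = if 1 ≤ (i : ℕ) ∧ (i : ℕ) ≤ w ∧ (j : ℕ) = (i : ℕ) - 1 then 1 else 0 := by
  unfold uvec
  by_cases h : 1 ≤ (i : ℕ) ∧ (i : ℕ) ≤ w
  · rw [dif_pos h, Pi.single_apply]
    by_cases hj : (j : ℕ) = (i : ℕ) - 1
    · rw [if_pos (show j = ⟨(i:ℕ)-1,_⟩ from Fin.ext hj), if_pos ⟨h.1, h.2, hj⟩]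
    · rw [if_neg (fun hc => hj (by rw [hc])), if_neg (by tauto)]
  · rw [dif_neg h, if_neg (by tauto)]
    rfl

lemma duvec_ne_zero (w : ℕ) (hw : 1 ≤ w) (i : Fin (w + 1)) : duvec w i ≠ 0 := by
  intro h
  unfold duvec at h
  have h1 : ∀ j : Fin w, uvec w i.castSucc j + uvec w i.succ j = 0 := by
    intro j; rw [← Pi.add_apply, h]; rfl
  by_cases h0 : (i : ℕ) = 0
  · have := h1 ⟨0, by omega⟩
    rw [uvec_apply, uvec_apply] at this
    simp only [Fin.coe_castSucc, Fin.val_succ, h0] at this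
    rw [if_neg (by omega), if_pos (by refine ⟨by omega, by omega, ?_⟩; simp)] at this
    norm_num at this
  · by_cases hww : (i : ℕ) ≤ w - 1
    · have := h1 ⟨(i : ℕ), by omega⟩
      rw [uvec_apply, uvec_apply] at this
      simp only [Fin.coe_castSucc, Fin.val_succ] at this
      rw [if_neg (by omega), if_pos (by omega)] at this
      norm_num at this
    · have hiw : (i : ℕ) = w := by have := i.isLt; omega
      have := h1 ⟨w - 1, by omega⟩
      rw [uvec_apply, uvec_apply] at this
      simp only [Fin.coe_castSucc, Fin.val_succ] at this
      rw [if_pos (by omega), if_neg (by omega)] at this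
      norm_num at this

lemma hammingNorm_stack (R m : ℕ) (v : Fin m → ZMod 2) :
    hammingNorm (fun q : Fin R × Fin m => v q.2) = R * hammingNorm v := by
  unfold hammingNorm
  have : (Finset.univ.filter fun q : Fin R × Fin m => v q.2 ≠ 0) =
      (Finset.univ : Finset (Fin R)) ×ˢ (Finset.univ.filter fun j => v j ≠ 0) := by
    ext q
    simp [Finset.mem_product]
  rw [this, Finset.card_product]
  simp

lemma block_length (R m w : ℕ) (H : Matrix (Fin m) (Fin w) (ZMod 2)) (i : Fin (w + 1)) :
    (block R m w H i).length = R * sblk m w H i := by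
  unfold block sblk
  rw [List.length_map, List.length_range]
  congr 1
  have : Ftil R m w H i.castSucc + Ftil R m w H i.succ =
      fun q : Fin R × Fin m => vblkH m w H i q.2 := by
    funext q
    rw [Pi.add_apply, Ftil_apply, Ftil_apply]
    rfl
  rw [this, hammingNorm_stack]

end Unfold

namespace Unfold

section ListAux
variable {α β : Type*}

lemma list_sum_range_map (f : ℕ → ℕ) : ∀ n, ((List.range n).map f).sum = ∑ j ∈ Finset.range n, f j := by
  intro n
  induction n with
  | zero => simp
  | succ n ih => rw [List.range_succ, Finset.sum_range_succ, List.map_append, List.sum_append, ih]; simp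

lemma flatMap_getElem? : ∀ (l : List α) (f : α → List β) (i : ℕ) (hi : i < l.length)
    (k : ℕ) (hk : k < (f l[i]).length),
    (l.flatMap f)[(((l.take i).map fun a => (f a).length).sum + k)]? = (f l[i])[k]? := by
  intro l f
  induction l with
  | nil => intro i hi; simp at hi
  | cons a l ih =>
    intro i hi k hk
    cases i with
    | zero =>
      simp only [List.take_zero, List.map_nil, List.sum_nil, Nat.zero_add, List.flatMap_cons]
      rw [List.getElem?_append_left]
      · simp
      · simpa using hk
    | succ i =>
      simp only [List.take_succ_cons, List.map_cons, List.sum_cons, List.flatMap_cons]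
      rw [Nat.add_assoc, List.getElem?_append_right (by omega), Nat.add_sub_cancel_left]
      exact ih i (by simpa using hi) k (by simpa using hk)

lemma exists_block_decomp (f : ℕ → ℕ) : ∀ (N n : ℕ), n < ∑ j ∈ Finset.range N, f j →
    ∃ i < N, ∃ k < f i, n = (∑ j ∈ Finset.range i, f j) + k := by
  intro N
  induction N with
  | zero => intro n h; simp at h
  | succ N ih =>
    intro n h
    by_cases hn : n < ∑ j ∈ Finset.range N, f j
    · obtain ⟨i, hi, k, hk, hik⟩ := ih n hn
      exact ⟨i, by omega, k, hk, hik⟩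
    · refine ⟨N, by omega, n - ∑ j ∈ Finset.range N, f j, ?_, by omega⟩
      rw [Finset.sum_range_succ] at h; omega

lemma take_map_sum (g : α → ℕ) (junk : α) : ∀ (l : List α) (i : ℕ), i ≤ l.length →
    ((l.take i).map g).sum = ∑ j ∈ Finset.range i, g (l.getD j junk) := by
  intro l
  induction l with
  | nil =>
    intro i hi
    have : i = 0 := by simpa using hi
    subst this; simp
  | cons a l ih =>
    intro i hi
    cases i with
    | zero => simp
    | succ i =>
      simp only [List.take_succ_cons, List.map_cons, List.sum_cons]
      rw [ih i (by simpa using hi)]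
      rw [Finset.sum_range_succ']
      simp only [List.getD_cons_succ, List.getD_cons_zero]
      omega

end ListAux

/-! ### Index bookkeeping -/

variable (R m w : ℕ) (H : Matrix (Fin m) (Fin w) (ZMod 2))

def fblk : ℕ → ℕ := fun j => if h : j < w + 1 then (block R m w H ⟨j, h⟩).length else 0

def Ltot : ℕ := ∑ j ∈ Finset.range (w + 1), fblk R m w H j

lemma fblk_coe (i : Fin (w + 1)) : fblk R m w H (i : ℕ) = (block R m w H i).length := by
  unfold fblk
  rw [dif_pos i.isLt]

lemma dpos_eq (i : Fin (w + 1)) :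
    dpos R m w H i = ∑ j ∈ Finset.range (i : ℕ), fblk R m w H j := by
  rw [dpos]
  refine Finset.sum_nbij' (i := fun (j : Fin (w + 1)) => (j : ℕ))
    (j := fun n => (⟨min n w, by omega⟩ : Fin (w + 1))) ?_ ?_ ?_ ?_ ?_
  · intro a ha
    simp only [Finset.mem_filter, Finset.mem_univ, true_and, Fin.lt_def] at ha
    simpa using ha
  · intro n hn
    simp only [Finset.mem_range] at hn
    simp only [Finset.mem_filter, Finset.mem_univ, true_and, Fin.lt_def]
    have := i.isLt
    omega
  · intro a ha
    simp only [Finset.mem_filter, Finset.mem_univ, true_and, Fin.lt_def] at ha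
    apply Fin.ext
    have h1 := i.isLt
    have h2 := a.isLt
    simp only [Fin.val_mk]
    omega
  · intro n hn
    simp only [Finset.mem_range] at hn
    have := i.isLt
    simp only [Fin.val_mk]
    omega
  · intro a ha
    rw [fblk_coe]

lemma flat_length : ((List.finRange (w + 1)).flatMap fun i => block R m w H i).length
    = Ltot R m w H := by
  rw [List.length_flatMap, Ltot]
  have h1 : (List.finRange (w + 1)).map (fun i => (block R m w H i).length) =
      ((List.finRange (w + 1)).take (w + 1)).map (fun i => (block R m w H i).length) := by
    rw [List.take_of_length_le (by simp)]
  rw [h1, take_map_sum _ ⟨0, by omega⟩ _ _ (by simp)]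
  apply Finset.sum_congr rfl
  intro j hj
  simp only [Finset.mem_range] at hj
  have hg : (List.finRange (w + 1)).getD j ⟨0, by omega⟩ = ⟨j, hj⟩ := by
    rw [List.getD_eq_getElem?_getD, List.getElem?_eq_getElem (by simpa using hj)]
    simp
  rw [hg, ← fblk_coe]

lemma N_eq : N R m w H = Ltot R m w H + 1 := by
  rw [N, cols, List.length_append, flat_length]
  rfl

lemma dpos_add_le (i : Fin (w + 1)) :
    dpos R m w H i + (block R m w H i).length ≤ Ltot R m w H := by
  rw [dpos_eq, ← fblk_coe, Ltot, ← Finset.sum_range_succ]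
  exact Finset.sum_le_sum_of_subset (Finset.range_subset_range.2 (by omega))

lemma dpos_mono_strict (i i' : Fin (w + 1)) (h : (i : ℕ) < (i' : ℕ)) :
    dpos R m w H i + (block R m w H i).length ≤ dpos R m w H i' := by
  rw [dpos_eq, dpos_eq, ← fblk_coe, ← Finset.sum_range_succ]
  exact Finset.sum_le_sum_of_subset (Finset.range_subset_range.2 (by omega))

lemma dpos_mono (i i' : Fin (w + 1)) (h : (i : ℕ) ≤ (i' : ℕ)) :
    dpos R m w H i ≤ dpos R m w H i' := by
  rw [dpos_eq, dpos_eq]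
  exact Finset.sum_le_sum_of_subset (Finset.range_subset_range.2 (by omega))

/-- Decomposition of columns. -/
lemma cols_get (p : Fin (N R m w H)) :
    ((p : ℕ) = Ltot R m w H ∧ (cols R m w H).get p = 0) ∨
    ∃ (i : Fin (w + 1)) (k : ℕ), k < (block R m w H i).length ∧
      (p : ℕ) = dpos R m w H i + k ∧
      (cols R m w H).get p =
        Ftil R m w H i.castSucc +
          truncFirst (Ftil R m w H i.castSucc + Ftil R m w H i.succ) k := by
  have hlen : (p : ℕ) < (cols R m w H).length := p.isLt
  have hp : (p : ℕ) < Ltot R m w H + 1 := by rw [← N_eq]; exact p.isLt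
  by_cases hL : (p : ℕ) = Ltot R m w H
  · left
    refine ⟨hL, ?_⟩
    have : (cols R m w H)[(p : ℕ)]? = some 0 := by
      rw [cols, List.getElem?_append_right (by rw [flat_length]; omega)]
      rw [flat_length]
      simp [hL]
    rw [List.getElem?_eq_getElem hlen] at this
    show (cols R m w H)[(p : ℕ)] = _
    exact Option.some.inj this
  · right
    have hplt : (p : ℕ) < Ltot R m w H := by omega
    obtain ⟨i0, hi0, k, hk, hpik⟩ := exists_block_decomp (fblk R m w H) (w + 1) (p : ℕ)
      (by rwa [← Ltot])
    set i : Fin (w + 1) := ⟨i0, hi0⟩ with hidef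
    have hk' : k < (block R m w H i).length := by rw [← fblk_coe]; exact hk
    refine ⟨i, k, hk', ?_, ?_⟩
    · rw [dpos_eq]; exact hpik
    · have hfr : (List.finRange (w + 1))[i0]'(by simpa using hi0) = i := by simp [hidef]
      have hsum : (((List.finRange (w + 1)).take i0).map
          (fun a => (block R m w H a).length)).sum = dpos R m w H i := by
        rw [take_map_sum _ ⟨0, by omega⟩ _ _ (by simp; omega), dpos_eq]
        apply Finset.sum_congr rfl
        intro j hj
        simp only [Finset.mem_range] at hj
        have hjw : j < w + 1 := by omega
        have hg : (List.finRange (w + 1)).getD j ⟨0, by omega⟩ = ⟨j, hjw⟩ := by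
          rw [List.getD_eq_getElem?_getD, List.getElem?_eq_getElem (by simpa using hjw)]
          simp
        rw [hg, ← fblk_coe]
      have hflat := flatMap_getElem? (List.finRange (w + 1)) (fun i => block R m w H i)
        i0 (by simpa using hi0) k (by rwa [hfr])
      rw [hsum, hfr] at hflat
      have hblk : (block R m w H i)[k]? = some (Ftil R m w H i.castSucc +
          truncFirst (Ftil R m w H i.castSucc + Ftil R m w H i.succ) k) := by
        rw [block, List.getElem?_map]
        rw [List.getElem?_range (by rwa [block, List.length_map, List.length_range] at hk')]
        rfl
      have : (cols R m w H)[(p : ℕ)]? = some (Ftil R m w H i.castSucc +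
          truncFirst (Ftil R m w H i.castSucc + Ftil R m w H i.succ) k) := by
        rw [cols, List.getElem?_append_left (by rw [flat_length]; omega)]
        rw [← (show (p:ℕ) = dpos R m w H i + k by rw [dpos_eq]; exact hpik)] at hflat
        rw [hflat, hblk]
      rw [List.getElem?_eq_getElem hlen] at this
      show (cols R m w H)[(p : ℕ)] = _
      exact Option.some.inj this

end Unfold

namespace Unfold

lemma trunc_count (R m : ℕ) (v : Fin m → ZMod 2) (b : Fin R) (j : Fin m) :
    (Finset.univ.filter fun q : Fin R × Fin m => v q.2 ≠ 0 ∧ lexLt q (b, j)).card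
      = (b : ℕ) * hammingNorm v
        + (Finset.univ.filter fun j' => v j' ≠ 0 ∧ j' < j).card := by
  have hset : (Finset.univ.filter fun q : Fin R × Fin m => v q.2 ≠ 0 ∧ lexLt q (b, j)) =
      ((Finset.Iio b) ×ˢ (Finset.univ.filter fun j' => v j' ≠ 0)) ∪
        ({b} ×ˢ (Finset.univ.filter fun j' => v j' ≠ 0 ∧ j' < j)) := by
    ext q
    obtain ⟨b', j'⟩ := q
    rw [Finset.mem_filter]
    simp only [Finset.mem_filter, Finset.mem_univ, true_and, Finset.mem_union,
      Finset.mem_product, Finset.mem_Iio, Finset.mem_singleton, lexLt]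
    tauto
  rw [hset, Finset.card_union_of_disjoint, Finset.card_product, Finset.card_product]
  · rw [Fin.card_Iio, Finset.card_singleton, one_mul, hammingNorm]
  · rw [Finset.disjoint_left]
    rintro ⟨b', j'⟩ hq1 hq2
    simp only [Finset.mem_product, Finset.mem_Iio, Finset.mem_singleton] at hq1 hq2
    exact absurd hq1.1 (by rw [hq2.1]; exact lt_irrefl b)

lemma truncFirst_stack_full {R m : ℕ} (v : Fin m → ZMod 2) (k : ℕ) (b : Fin R)
    (h : ((b : ℕ) + 1) * hammingNorm v ≤ k) (j : Fin m) :
    truncFirst (fun q : Fin R × Fin m => v q.2) k (b, j) = v j := by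
  unfold truncFirst
  by_cases hv : v j = 0
  · rw [if_neg (by simp [hv]), hv]
  · have hcnt : (Finset.univ.filter fun j' => v j' ≠ 0 ∧ j' < j).card < hammingNorm v := by
      rw [hammingNorm]
      apply Finset.card_lt_card
      rw [Finset.ssubset_iff_of_subset (by intro a ha; simp only [Finset.mem_filter] at *; tauto)]
      exact ⟨j, by simp [hv], by simp⟩
    rw [if_pos]
    · exact (zmod2_eq_one_of_ne_zero hv).symm
    · refine ⟨hv, ?_⟩
      rw [trunc_count]
      have hx : ((b : ℕ) + 1) * hammingNorm v = (b : ℕ) * hammingNorm v + hammingNorm v := by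
        ring
      omega

lemma truncFirst_stack_zero {R m : ℕ} (v : Fin m → ZMod 2) (k : ℕ) (b : Fin R)
    (h : k ≤ (b : ℕ) * hammingNorm v) (j : Fin m) :
    truncFirst (fun q : Fin R × Fin m => v q.2) k (b, j) = 0 := by
  unfold truncFirst
  rw [if_neg]
  rintro ⟨hv, hcard⟩
  rw [trunc_count] at hcard
  omega

lemma Ftil_add_eq (R m w : ℕ) (H : Matrix (Fin m) (Fin w) (ZMod 2)) (i : Fin (w + 1)) :
    Ftil R m w H i.castSucc + Ftil R m w H i.succ =
      fun q : Fin R × Fin m => vblkH m w H i q.2 := by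
  funext q
  rw [Pi.add_apply, Ftil_apply, Ftil_apply]
  rfl

lemma col_restrict_full (R m w : ℕ) (H : Matrix (Fin m) (Fin w) (ZMod 2)) (i : Fin (w + 1))
    (k : ℕ) (b : Fin R) (h : ((b : ℕ) + 1) * sblk m w H i ≤ k) :
    (fun j => (Ftil R m w H i.castSucc +
      truncFirst (Ftil R m w H i.castSucc + Ftil R m w H i.succ) k) (b, j))
      = H.mulVec (uvec w i.succ) := by
  funext j
  rw [Pi.add_apply, Ftil_apply, Ftil_add_eq,
    truncFirst_stack_full (vblkH m w H i) k b (by rwa [← sblk]) j]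
  show FtH m w H i.castSucc j + vblkH m w H i j = _
  rw [vblkH, Pi.add_apply, ← add_assoc, zmod2_add_self, zero_add, FtH_eq_mulVec]

lemma col_restrict_zero (R m w : ℕ) (H : Matrix (Fin m) (Fin w) (ZMod 2)) (i : Fin (w + 1))
    (k : ℕ) (b : Fin R) (h : k ≤ (b : ℕ) * sblk m w H i) :
    (fun j => (Ftil R m w H i.castSucc +
      truncFirst (Ftil R m w H i.castSucc + Ftil R m w H i.succ) k) (b, j))
      = H.mulVec (uvec w i.castSucc) := by
  funext j
  rw [Pi.add_apply, Ftil_apply, Ftil_add_eq,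
    truncFirst_stack_zero (vblkH m w H i) k b (by rwa [← sblk]) j, add_zero, FtH_eq_mulVec]

lemma sblk_pos (m w : ℕ) (hw : 1 ≤ w) (H : Matrix (Fin m) (Fin w) (ZMod 2))
    (h2 : ∀ v : Fin w → ZMod 2, v ≠ 0 → hammingNorm v ≤ 2 → H.mulVec v ≠ 0) (i : Fin (w + 1)) :
    1 ≤ sblk m w H i := by
  rw [sblk, Nat.one_le_iff_ne_zero, hammingNorm_ne_zero_iff, vblkH_eq_mulVec]
  exact h2 _ (duvec_ne_zero w hw i) (duvec_norm_le w i)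

end Unfold

namespace Unfold

lemma blen_pos (R m w : ℕ) (H : Matrix (Fin m) (Fin w) (ZMod 2)) (hR : 1 ≤ R)
    (hsblk : ∀ i, 1 ≤ sblk m w H i) (i : Fin (w + 1)) : 1 ≤ (block R m w H i).length := by
  rw [block_length]
  exact Nat.one_le_iff_ne_zero.2 (Nat.mul_ne_zero (by omega) (by have := hsblk i; omega))

lemma ind_dpos (R m w : ℕ) (H : Matrix (Fin m) (Fin w) (ZMod 2))
    (hblen : ∀ i, 1 ≤ (block R m w H i).length) (i : Fin (w + 1)) (k : ℕ)
    (hk : k < (block R m w H i).length) (j : Fin (w + 1)) :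
    (dpos R m w H i + k ≤ dpos R m w H j) ↔
      ((i : ℕ) < (j : ℕ) ∨ ((i : ℕ) = (j : ℕ) ∧ k = 0)) := by
  rcases lt_trichotomy (i : ℕ) (j : ℕ) with h | h | h
  · have := dpos_mono_strict R m w H i j h
    constructor
    · intro; left; exact h
    · intro; omega
  · have hij : i = j := Fin.ext h
    subst hij
    constructor
    · intro hle; right; exact ⟨rfl, by omega⟩
    · rintro (h' | ⟨-, h'⟩); · omega
      omega
  · have := dpos_mono_strict R m w H j i h
    have := hblen j
    constructor
    · intro; omega
    · intro; omega

lemma sum_uvec (w : ℕ) (a : Fin (w + 2)) (j : Fin (w + 1)) :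
    (∑ i ∈ Finset.univ.filter (fun i : Fin w => (i : ℕ) < (j : ℕ)), uvec w a i)
      = if 1 ≤ (a : ℕ) ∧ (a : ℕ) ≤ w ∧ (a : ℕ) - 1 < (j : ℕ) then 1 else 0 := by
  unfold uvec
  by_cases h : 1 ≤ (a : ℕ) ∧ (a : ℕ) ≤ w
  · rw [dif_pos h, Finset.sum_pi_single']
    by_cases h3 : (a : ℕ) - 1 < (j : ℕ)
    · rw [if_pos, if_pos ⟨h.1, h.2, h3⟩]
      simp only [Finset.mem_filter, Finset.mem_univ, true_and]
      exact h3
    · rw [if_neg, if_neg (by tauto)]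
      simp only [Finset.mem_filter, Finset.mem_univ, true_and]
      exact h3
  · rw [dif_neg h, if_neg (by tauto)]
    simp

lemma scalar_full (iv jv k : ℕ) :
    ((if iv < jv ∨ (iv = jv ∧ k = 0) then (1 : ZMod 2) else 0)
      + (if iv < jv then 1 else 0))
      = (if iv = jv ∧ k = 0 then 1 else 0) := by
  split_ifs <;> first | decide | (exfalso; omega)

lemma scalar_notfull (iv jv k : ℕ) :
    ((if iv < jv ∨ (iv = jv ∧ k = 0) then (1 : ZMod 2) else 0)
      + (if 1 ≤ iv ∧ iv - 1 < jv then 1 else 0))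
      = (if iv = jv ∧ ¬(k = 0) then 1 else 0) + (if iv = 0 then 1 else 0) := by
  split_ifs <;> first | decide | (exfalso; omega)

lemma hammingNorm_ite_le {n : ℕ} (a : Fin n) (C : Fin n → Prop) [∀ j, Decidable (C j)]
    (hC : ∀ j, C j → j = a) :
    hammingNorm (fun j => if C j then (1 : ZMod 2) else 0) ≤ 1 := by
  unfold hammingNorm
  refine le_trans (Finset.card_le_card (t := {a}) ?_) (by simp)
  intro i hi
  simp only [Finset.mem_filter, Finset.mem_univ, true_and, Finset.mem_singleton] at *
  by_cases hc : C i
  · exact hC i hc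
  · rw [if_neg hc] at hi; exact absurd rfl hi

end Unfold

open Unfold in
/-- majority-vote decoding of the unfolded flag-gadget circuit with
`R = (t+1)^2` repetitions is fault-tolerant. For an error configuration `(e_s, e_f)` of
total weight at most `t` with observed flag pattern `P`: (a) the maximal multiplicity of a
subpattern `P_b = P (b, ·)` is at least `t+1`; and for every subpattern `Q` of maximal
multiplicity, (b) there is a unique `u` with `wt u ≤ t` and `H.mulVec u = Q`, and (c) the
correction `corr u` (flipping data qubit `j` according to the parity of `u` below `j`)
is fault-tolerant. -/
theorem majority_vote_decoding_fault_tolerant (t m w : ℕ) (ht : 1 ≤ t) (hm : 1 ≤ m)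
    (hw : 1 ≤ w) (H : Matrix (Fin m) (Fin w) (ZMod 2))
    (hH : ∀ v : Fin w → ZMod 2, v ≠ 0 → hammingNorm v ≤ 2 * t → H.mulVec v ≠ 0)
    (e_s : Fin (N ((t + 1) ^ 2) m w H) → ZMod 2)
    (e_f : Fin ((t + 1) ^ 2) × Fin m → ZMod 2)
    (he : hammingNorm e_s + hammingNorm e_f ≤ t)
    (P : Fin ((t + 1) ^ 2) × Fin m → ZMod 2)
    (hP : P = (Fc ((t + 1) ^ 2) m w H).mulVec e_s + e_f) :
    (∃ Q : Fin m → ZMod 2,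
      t + 1 ≤ (Finset.univ.filter fun b : Fin ((t + 1) ^ 2) =>
        (fun i => P (b, i)) = Q).card) ∧
    (∀ Q : Fin m → ZMod 2,
      (∀ Q' : Fin m → ZMod 2,
        (Finset.univ.filter fun b : Fin ((t + 1) ^ 2) => (fun i => P (b, i)) = Q').card ≤
        (Finset.univ.filter fun b : Fin ((t + 1) ^ 2) => (fun i => P (b, i)) = Q).card) →
      (∃! u : Fin w → ZMod 2, hammingNorm u ≤ t ∧ H.mulVec u = Q) ∧
      (∀ u : Fin w → ZMod 2, hammingNorm u ≤ t → H.mulVec u = Q →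
        ∀ x : Fin (w + 1) → ZMod 2,
          x = (Dc ((t + 1) ^ 2) m w H).mulVec e_s +
              (fun j : Fin (w + 1) =>
                ∑ i ∈ Finset.univ.filter (fun i : Fin w => (i : ℕ) < (j : ℕ)), u i) →
          min (hammingNorm x) ((w + 1) - hammingNorm x) ≤
            hammingNorm e_s + hammingNorm e_f)) := by
  classical
  have hRval : (t + 1) ^ 2 = t * t + 2 * t + 1 := by ring
  have hR1 : 1 ≤ (t + 1) ^ 2 := Nat.one_le_iff_ne_zero.2 (by positivity)
  have h2 : ∀ v : Fin w → ZMod 2, v ≠ 0 → hammingNorm v ≤ 2 → H.mulVec v ≠ 0 :=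
    fun v hv hn => hH v hv (by omega)
  have hsblk : ∀ i, 1 ≤ sblk m w H i := sblk_pos m w hw H h2
  have hblen : ∀ i, 1 ≤ (block ((t + 1) ^ 2) m w H i).length := blen_pos ((t + 1) ^ 2) m w H hR1 hsblk
  set L := Ltot ((t + 1) ^ 2) m w H with hLdef
  have hdec : ∀ p : Fin (N ((t + 1) ^ 2) m w H), ∃ (i : Fin (w + 1)) (k : ℕ),
      ((p : ℕ) = L ∧ (cols ((t + 1) ^ 2) m w H).get p = 0) ∨
      (k < (block ((t + 1) ^ 2) m w H i).length ∧ (p : ℕ) = dpos ((t + 1) ^ 2) m w H i + k ∧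
        (cols ((t + 1) ^ 2) m w H).get p = Ftil ((t + 1) ^ 2) m w H i.castSucc +
          truncFirst (Ftil ((t + 1) ^ 2) m w H i.castSucc + Ftil ((t + 1) ^ 2) m w H i.succ) k) := by
    intro p
    rcases cols_get ((t + 1) ^ 2) m w H p with h | ⟨i, k, h1, h2', h3⟩
    · exact ⟨⟨0, by omega⟩, 0, Or.inl h⟩
    · exact ⟨i, k, Or.inr ⟨h1, h2', h3⟩⟩
  choose ip kp hp using hdec
  have hpi : ∀ p : Fin (N ((t + 1) ^ 2) m w H), (p : ℕ) ≠ L →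
      kp p < (block ((t + 1) ^ 2) m w H (ip p)).length ∧ (p : ℕ) = dpos ((t + 1) ^ 2) m w H (ip p) + kp p ∧
      (cols ((t + 1) ^ 2) m w H).get p = Ftil ((t + 1) ^ 2) m w H (ip p).castSucc +
        truncFirst (Ftil ((t + 1) ^ 2) m w H (ip p).castSucc + Ftil ((t + 1) ^ 2) m w H (ip p).succ) (kp p) :=
    fun p h => (hp p).resolve_left (fun hc => h hc.1)
  have hpL : ∀ p : Fin (N ((t + 1) ^ 2) m w H), (p : ℕ) = L → (cols ((t + 1) ^ 2) m w H).get p = 0 := by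
    intro p h
    rcases hp p with h' | h'
    · exact h'.2
    · exfalso
      have h3 := dpos_add_le ((t + 1) ^ 2) m w H (ip p)
      omega
  set SS := Finset.univ.filter (fun p : Fin (N ((t + 1) ^ 2) m w H) => e_s p ≠ 0) with hSSdef
  have hSScard : SS.card = hammingNorm e_s := rfl
  set Bad : Finset (Fin ((t + 1) ^ 2)) :=
    ((Finset.univ.filter fun q : Fin ((t + 1) ^ 2) × Fin m => e_f q ≠ 0).image Prod.fst) ∪
      (SS.image fun p => (⟨kp p / sblk m w H (ip p) % ((t + 1) ^ 2), Nat.mod_lt _ (by omega)⟩ : Fin ((t + 1) ^ 2)))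
    with hBadDef
  have hBadcard : Bad.card ≤ hammingNorm e_f + hammingNorm e_s := by
    refine le_trans (Finset.card_union_le _ _) ?_
    have h1 := Finset.card_image_le (s := Finset.univ.filter fun q : Fin ((t + 1) ^ 2) × Fin m => e_f q ≠ 0)
      (f := Prod.fst)
    have h2' := Finset.card_image_le (s := SS)
      (f := fun p => (⟨kp p / sblk m w H (ip p) % ((t + 1) ^ 2), Nat.mod_lt _ (by omega)⟩ : Fin ((t + 1) ^ 2)))
    have hef : (Finset.univ.filter fun q : Fin ((t + 1) ^ 2) × Fin m => e_f q ≠ 0).card = hammingNorm e_f :=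
      rfl
    omega
  set Wf : Fin (N ((t + 1) ^ 2) m w H) → Fin ((t + 1) ^ 2) → (Fin w → ZMod 2) := fun p b =>
    if (p : ℕ) = L then 0
    else if ((b : ℕ) + 1) * sblk m w H (ip p) ≤ kp p then uvec w (ip p).succ
    else uvec w (ip p).castSucc with hWfdef
  set Ub : Fin ((t + 1) ^ 2) → (Fin w → ZMod 2) := fun b => ∑ p ∈ SS, Wf p b with hUbdef
  have hrestr : ∀ p, ∀ b : Fin ((t + 1) ^ 2), b ∉ Bad → e_s p ≠ 0 →
      (fun i => (cols ((t + 1) ^ 2) m w H).get p (b, i)) = H.mulVec (Wf p b) := by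
    intro p b hb hes
    have hWfp : Wf p b = if (p : ℕ) = L then 0
        else if ((b : ℕ) + 1) * sblk m w H (ip p) ≤ kp p then uvec w (ip p).succ
        else uvec w (ip p).castSucc := by rw [hWfdef]
    by_cases hL' : (p : ℕ) = L
    · rw [hpL p hL', hWfp, if_pos hL', Matrix.mulVec_zero]
      funext i
      rfl
    · obtain ⟨hk, hpd, hcol⟩ := hpi p hL'
      rw [hcol, hWfp, if_neg hL']
      by_cases hf : ((b : ℕ) + 1) * sblk m w H (ip p) ≤ kp p
      · rw [if_pos hf]
        exact col_restrict_full _ m w H (ip p) (kp p) b hf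
      · rw [if_neg hf]
        apply col_restrict_zero
        by_contra hlt
        push_neg at hlt
        have hs := hsblk (ip p)
        have hdiv : kp p / sblk m w H (ip p) = (b : ℕ) := by
          have h1 : (b : ℕ) ≤ kp p / sblk m w H (ip p) :=
            (Nat.le_div_iff_mul_le (by omega)).2 (by omega)
          have h2'' : kp p / sblk m w H (ip p) < (b : ℕ) + 1 :=
            (Nat.div_lt_iff_lt_mul (by omega)).2 (by omega)
          omega
        apply hb
        rw [hBadDef]
        refine Finset.mem_union_right _ (Finset.mem_image.2 ⟨p, ?_, ?_⟩)
        · rw [hSSdef]; simp [hes]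
        · apply Fin.ext
          simp only
          rw [hdiv, Nat.mod_eq_of_lt b.isLt]
  have hpat : ∀ b : Fin ((t + 1) ^ 2), b ∉ Bad → (fun i => P (b, i)) = H.mulVec (Ub b) := by
    intro b hb
    funext i
    rw [hP]
    simp only [Pi.add_apply]
    have hef : e_f (b, i) = 0 := by
      by_contra hne
      apply hb
      rw [hBadDef]
      exact Finset.mem_union_left _ (Finset.mem_image.2 ⟨(b, i), by simp [hne], rfl⟩)
    rw [hef, add_zero]
    have hmv : H.mulVec (Ub b) i = ∑ p ∈ SS, H.mulVec (Wf p b) i := by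
      have hUbb : Ub b = ∑ p ∈ SS, Wf p b := by rw [hUbdef]
      rw [hUbb]
      have hlin : H.mulVec (∑ p ∈ SS, Wf p b) = ∑ p ∈ SS, H.mulVec (Wf p b) := by
        simp only [← Matrix.mulVecLin_apply]
        exact map_sum (Matrix.mulVecLin H) _ SS
      rw [hlin, Finset.sum_apply]
    rw [hmv]
    show ∑ p, Fc ((t + 1) ^ 2) m w H (b, i) p * e_s p = _
    rw [← Finset.sum_filter_of_ne (p := fun p : Fin (N ((t + 1) ^ 2) m w H) => e_s p ≠ 0)
      (fun x _ hx => by intro h0; rw [h0, mul_zero] at hx; exact hx rfl), ← hSSdef]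
    apply Finset.sum_congr rfl
    intro p hpS
    have hes : e_s p ≠ 0 := by
      rw [hSSdef] at hpS
      simpa using hpS
    rw [zmod2_eq_one_of_ne_zero hes, mul_one]
    exact congrFun (hrestr p b hb hes) i
  have hUbwt : ∀ b, hammingNorm (Ub b) ≤ hammingNorm e_s := by
    intro b
    have hUbb : Ub b = ∑ p ∈ SS, Wf p b := by rw [hUbdef]
    rw [hUbb]
    refine le_trans (hammingNorm_sum_le SS _) ?_
    rw [← hSScard]
    have hb1 : ∀ p ∈ SS, hammingNorm (Wf p b) ≤ 1 := by
      intro p _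
      have hWfp : Wf p b = if (p : ℕ) = L then 0
          else if ((b : ℕ) + 1) * sblk m w H (ip p) ≤ kp p then uvec w (ip p).succ
          else uvec w (ip p).castSucc := by rw [hWfdef]
      rw [hWfp]
      split_ifs
      · simp
      · exact uvec_norm_le w (ip p).succ
      · exact uvec_norm_le w (ip p).castSucc
    calc ∑ p ∈ SS, hammingNorm (Wf p b) ≤ ∑ p ∈ SS, 1 := Finset.sum_le_sum hb1
      _ = SS.card := by simp
  have hchain : (Finset.univ.image Ub).card ≤ hammingNorm e_s + 1 := by
    set Sb : Fin ((t + 1) ^ 2) → Finset (Fin (N ((t + 1) ^ 2) m w H)) := fun b =>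
      SS.filter (fun p => ¬(((b : ℕ) + 1) * sblk m w H (ip p) ≤ kp p)) with hSbdef
    set Uf : Finset (Fin (N ((t + 1) ^ 2) m w H)) → (Fin w → ZMod 2) := fun A =>
      ∑ p ∈ SS, (if (p : ℕ) = L then 0 else if p ∈ A then uvec w (ip p).castSucc
        else uvec w (ip p).succ) with hUfdef
    have hUbS : ∀ b, Ub b = Uf (Sb b) := by
      intro b
      rw [hUbdef, hUfdef, hSbdef]
      simp only
      apply Finset.sum_congr rfl
      intro p hpS
      have hWfp : Wf p b = if (p : ℕ) = L then 0
          else if ((b : ℕ) + 1) * sblk m w H (ip p) ≤ kp p then uvec w (ip p).succ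
          else uvec w (ip p).castSucc := by rw [hWfdef]
      rw [hWfp]
      by_cases hL' : (p : ℕ) = L
      · rw [if_pos hL', if_pos hL']
      · rw [if_neg hL', if_neg hL']
        by_cases hf : (((b : ℕ) + 1) * sblk m w H (ip p) ≤ kp p)
        · rw [if_pos hf, if_neg (by
            intro hmem
            rw [Finset.mem_filter] at hmem
            exact hmem.2 hf)]
        · rw [if_neg hf, if_pos (Finset.mem_filter.2 ⟨hpS, hf⟩)]
    have himg : Finset.univ.image Ub ⊆ (Finset.univ.image Sb).image Uf := by
      intro Q hQ
      simp only [Finset.mem_image, Finset.mem_univ, true_and] at hQ ⊢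
      obtain ⟨b, rfl⟩ := hQ
      exact ⟨Sb b, ⟨b, rfl⟩, (hUbS b).symm⟩
    refine le_trans (Finset.card_le_card himg) (le_trans Finset.card_image_le ?_)
    rw [← hSScard]
    refine card_image_monotone_le Sb SS (fun b => Finset.filter_subset _ _) ?_
    intro b b' hbb' p hpmem
    rw [Finset.mem_filter] at hpmem
    rw [Finset.mem_filter]
    refine ⟨hpmem.1, fun hc => hpmem.2 ?_⟩
    have hmul : ((b : ℕ) + 1) * sblk m w H (ip p) ≤ ((b' : ℕ) + 1) * sblk m w H (ip p) :=
      Nat.mul_le_mul_right _ (by have : (b : ℕ) ≤ (b' : ℕ) := hbb'; omega)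
    omega
  set G := (Finset.univ : Finset (Fin ((t + 1) ^ 2))) \ Bad with hGdef
  have hGcard : t * t + t + 1 ≤ G.card := by
    rw [hGdef, Finset.card_sdiff_of_subset (Finset.subset_univ _), Finset.card_univ, Fintype.card_fin]
    have h3 : Bad.card ≤ t := by omega
    set s' := t * t with hs'
    omega
  have hwtes : hammingNorm e_s ≤ t := by omega
  have parta : ∃ Q : Fin m → ZMod 2,
      t + 1 ≤ (Finset.univ.filter fun b : Fin ((t + 1) ^ 2) => (fun i => P (b, i)) = Q).card := by
    have hTcard : (G.image (fun b => (fun i => P (b, i)))).card ≤ t + 1 := by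
      have hsubT : G.image (fun b => (fun i => P (b, i))) ⊆
          (Finset.univ.image Ub).image H.mulVec := by
        intro Q hQ
        simp only [Finset.mem_image, Finset.mem_univ, true_and] at hQ ⊢
        obtain ⟨b, hbG, rfl⟩ := hQ
        have hbBad : b ∉ Bad := (Finset.mem_sdiff.1 hbG).2
        exact ⟨Ub b, ⟨b, rfl⟩, (hpat b hbBad).symm⟩
      refine le_trans (Finset.card_le_card hsubT) (le_trans Finset.card_image_le ?_)
      omega
    have hlt : (G.image (fun b => (fun i => P (b, i)))).card * t < G.card := by
      have h5 : (G.image (fun b => (fun i => P (b, i)))).card * t ≤ (t + 1) * t :=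
        Nat.mul_le_mul_right _ hTcard
      have h6 : (t + 1) * t = t * t + t := by ring
      set s' := t * t with hs'
      omega
    obtain ⟨Q, hQT, hQc⟩ := Finset.exists_lt_card_fiber_of_mul_lt_card_of_maps_to
      (fun b hb => Finset.mem_image_of_mem (fun b => (fun i => P (b, i))) hb) hlt
    have hfix : (G.filter fun x => (fun b (i : Fin m) => P (b, i)) x = Q)
        = (G.filter fun b => (fun i => P (b, i)) = Q) :=
      Finset.filter_congr (fun b _ => Iff.rfl)
    rw [hfix] at hQc
    refine ⟨Q, ?_⟩
    have hsubf : (G.filter fun b => (fun i => P (b, i)) = Q) ⊆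
        (Finset.univ.filter fun b => (fun i => P (b, i)) = Q) :=
      Finset.filter_subset_filter _ (Finset.subset_univ G)
    have h7 := Finset.card_le_card hsubf
    omega
  refine ⟨parta, ?_⟩
  intro Q hQmax
  obtain ⟨Q₀, hQ₀⟩ := parta
  have hQcard : t + 1 ≤ (Finset.univ.filter fun b : Fin ((t + 1) ^ 2) => (fun i => P (b, i)) = Q).card :=
    le_trans hQ₀ (hQmax Q₀)
  obtain ⟨bst, hbstQ, hbstG⟩ : ∃ b : Fin ((t + 1) ^ 2), (fun i => P (b, i)) = Q ∧ b ∉ Bad := by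
    have hsub : ¬ (Finset.univ.filter fun b : Fin ((t + 1) ^ 2) => (fun i => P (b, i)) = Q) ⊆ Bad := by
      intro hsub
      have h8 := Finset.card_le_card hsub
      omega
    obtain ⟨b, hbmem, hbBad⟩ := Finset.not_subset.1 hsub
    exact ⟨b, (Finset.mem_filter.1 hbmem).2, hbBad⟩
  have hqf : H.mulVec (Ub bst) = Q := by rw [← hpat bst hbstG, hbstQ]
  have hwtu : hammingNorm (Ub bst) ≤ t := le_trans (hUbwt bst) hwtes
  have huniq : ∀ y : Fin w → ZMod 2, hammingNorm y ≤ t → H.mulVec y = Q → y = Ub bst := by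
    intro y hyt hyQ
    by_contra hne
    have hzero : H.mulVec (y - Ub bst) = 0 := by
      have : H.mulVec (y - Ub bst) = H.mulVec y - H.mulVec (Ub bst) := by
        simp only [← Matrix.mulVecLin_apply]
        exact map_sub (Matrix.mulVecLin H) _ _
      rw [this, hyQ, hqf, sub_self]
    have hnorm : hammingNorm (y - Ub bst) ≤ 2 * t := by
      have h9 : hammingNorm (y - Ub bst) = hammingDist y (Ub bst) :=
        by rw [hammingDist_comm, hammingDist_eq_hammingNorm, neg_add_eq_sub]
      have h10 := hammingDist_triangle y 0 (Ub bst)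
      rw [hammingDist_zero_right] at h10
      have h11 : hammingDist 0 (Ub bst) = hammingNorm (Ub bst) := by
        rw [hammingDist_comm, hammingDist_zero_right]
      rw [h11] at h10
      omega
    exact hH _ (sub_ne_zero_of_ne hne) hnorm hzero
  constructor
  · exact ⟨Ub bst, ⟨hwtu, hqf⟩, fun y hy => huniq y hy.1 hy.2⟩
  · intro u hu hQu x hx
    have hueq : u = Ub bst := huniq u hu hQu
    set σ : Fin (N ((t + 1) ^ 2) m w H) → (Fin (w + 1) → ZMod 2) := fun p => fun j =>
      if (p : ℕ) ≠ L ∧ j = ip p ∧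
          ((kp p = 0) ↔ (((bst : ℕ) + 1) * sblk m w H (ip p) ≤ kp p)) then 1 else 0 with hσdef
    set ε : Fin (N ((t + 1) ^ 2) m w H) → ZMod 2 := fun p =>
      if (p : ℕ) ≠ L ∧ ¬(((bst : ℕ) + 1) * sblk m w H (ip p) ≤ kp p) ∧ (ip p : ℕ) = 0
      then 1 else 0 with hεdef
    have hg : ∀ p ∈ SS, ∀ j : Fin (w + 1),
        (if (p : ℕ) ≤ dpos ((t + 1) ^ 2) m w H j then (1 : ZMod 2) else 0) +
          (∑ i ∈ Finset.univ.filter (fun i : Fin w => (i : ℕ) < (j : ℕ)), Wf p bst i)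
        = σ p j + ε p := by
      intro p hpS j
      have hWfp : Wf p bst = if (p : ℕ) = L then 0
          else if ((bst : ℕ) + 1) * sblk m w H (ip p) ≤ kp p then uvec w (ip p).succ
          else uvec w (ip p).castSucc := by rw [hWfdef]
      have hσp : σ p j = if (p : ℕ) ≠ L ∧ j = ip p ∧
          ((kp p = 0) ↔ (((bst : ℕ) + 1) * sblk m w H (ip p) ≤ kp p)) then (1 : ZMod 2)
          else 0 := by rw [hσdef]
      have hεp : ε p = if (p : ℕ) ≠ L ∧ ¬(((bst : ℕ) + 1) * sblk m w H (ip p) ≤ kp p) ∧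
          (ip p : ℕ) = 0 then (1 : ZMod 2) else 0 := by rw [hεdef]
      rw [hσp, hεp, hWfp]
      by_cases hL' : (p : ℕ) = L
      · rw [if_pos hL']
        have hdj : ¬ ((p : ℕ) ≤ dpos ((t + 1) ^ 2) m w H j) := by
          have h1 := dpos_add_le ((t + 1) ^ 2) m w H j
          have h2'' := hblen j
          omega
        rw [if_neg hdj,
          if_neg (show ¬((p : ℕ) ≠ L ∧ j = ip p ∧
            ((kp p = 0) ↔ (((bst : ℕ) + 1) * sblk m w H (ip p) ≤ kp p)))
            from fun hc => hc.1 hL'),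
          if_neg (show ¬((p : ℕ) ≠ L ∧ ¬(((bst : ℕ) + 1) * sblk m w H (ip p) ≤ kp p) ∧
            (ip p : ℕ) = 0) from fun hc => hc.1 hL')]
        simp
      · obtain ⟨hk, hpd, -⟩ := hpi p hL'
        have hind : ((p : ℕ) ≤ dpos ((t + 1) ^ 2) m w H j) ↔
            ((ip p : ℕ) < (j : ℕ) ∨ ((ip p : ℕ) = (j : ℕ) ∧ kp p = 0)) := by
          rw [hpd]
          exact ind_dpos ((t + 1) ^ 2) m w H hblen (ip p) (kp p) hk j
        rw [if_congr hind rfl rfl, if_neg hL']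
        by_cases hf : ((bst : ℕ) + 1) * sblk m w H (ip p) ≤ kp p
        · rw [if_pos hf, sum_uvec]
          have hτ : (1 ≤ ((ip p).succ : ℕ) ∧ ((ip p).succ : ℕ) ≤ w ∧
              ((ip p).succ : ℕ) - 1 < (j : ℕ)) ↔ ((ip p : ℕ) < (j : ℕ)) := by
            simp only [Fin.val_succ]
            have hj := j.isLt
            have hi := (ip p).isLt
            omega
          rw [if_congr hτ rfl rfl, scalar_full]
          rw [if_neg (show ¬((p : ℕ) ≠ L ∧ ¬(((bst : ℕ) + 1) * sblk m w H (ip p) ≤ kp p) ∧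
            (ip p : ℕ) = 0) from fun hc => hc.2.1 hf), add_zero]
          apply if_congr _ rfl rfl
          constructor
          · rintro ⟨hvij, hk0⟩
            exact ⟨hL', (Fin.ext hvij).symm, iff_of_true hk0 hf⟩
          · rintro ⟨-, hj2, hiff⟩
            exact ⟨by rw [hj2], hiff.2 hf⟩
        · rw [if_neg hf, sum_uvec]
          have hτ : (1 ≤ ((ip p).castSucc : ℕ) ∧ ((ip p).castSucc : ℕ) ≤ w ∧
              ((ip p).castSucc : ℕ) - 1 < (j : ℕ)) ↔
              (1 ≤ (ip p : ℕ) ∧ (ip p : ℕ) - 1 < (j : ℕ)) := by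
            simp only [Fin.coe_castSucc]
            have hi := (ip p).isLt
            omega
          rw [if_congr hτ rfl rfl, scalar_notfull]
          congr 1
          · apply if_congr _ rfl rfl
            constructor
            · rintro ⟨hvij, hk0⟩
              exact ⟨hL', (Fin.ext hvij).symm, iff_of_false hk0 hf⟩
            · rintro ⟨-, hj2, hiff⟩
              exact ⟨by rw [hj2], fun hk0 => hf (hiff.1 hk0)⟩
          · apply if_congr _ rfl rfl
            constructor
            · intro h0
              exact ⟨hL', hf, h0⟩
            · rintro ⟨-, -, h0⟩
              exact h0
    have hxj : ∀ j, x j = (∑ p ∈ SS, σ p j) + (∑ p ∈ SS, ε p) := by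
      intro j
      rw [hx]
      simp only [Pi.add_apply]
      have h1 : Matrix.mulVec (Dc ((t + 1) ^ 2) m w H) e_s j
          = ∑ p ∈ SS, (if (p : ℕ) ≤ dpos ((t + 1) ^ 2) m w H j then (1 : ZMod 2) else 0) := by
        show ∑ p, Dc ((t + 1) ^ 2) m w H j p * e_s p = _
        rw [← Finset.sum_filter_of_ne (p := fun p : Fin (N ((t + 1) ^ 2) m w H) => e_s p ≠ 0)
          (fun y _ hy' => by intro h0; rw [h0, mul_zero] at hy'; exact hy' rfl), ← hSSdef]
        apply Finset.sum_congr rfl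
        intro p hpS
        have hes : e_s p ≠ 0 := by
          rw [hSSdef] at hpS
          simpa using hpS
        rw [zmod2_eq_one_of_ne_zero hes, mul_one]
        rfl
      have h2' : (∑ i ∈ Finset.univ.filter (fun i : Fin w => (i : ℕ) < (j : ℕ)), u i)
          = ∑ p ∈ SS,
            (∑ i ∈ Finset.univ.filter (fun i : Fin w => (i : ℕ) < (j : ℕ)), Wf p bst i) := by
        rw [hueq]
        have hUbb : Ub bst = ∑ p ∈ SS, Wf p bst := by rw [hUbdef]
        rw [hUbb]
        simp only [Finset.sum_apply]
        exact Finset.sum_comm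
      rw [h1, h2', ← Finset.sum_add_distrib, ← Finset.sum_add_distrib]
      exact Finset.sum_congr rfl (fun p hpS => hg p hpS j)
    have hy : hammingNorm (fun j => ∑ p ∈ SS, σ p j) ≤ hammingNorm e_s := by
      have hfeq : (fun j => ∑ p ∈ SS, σ p j) = ∑ p ∈ SS, σ p := by
        funext j
        rw [Finset.sum_apply]
      rw [hfeq]
      refine le_trans (hammingNorm_sum_le SS σ) ?_
      rw [← hSScard]
      have hb1 : ∀ p ∈ SS, hammingNorm (σ p) ≤ 1 := by
        intro p _
        have hσp : σ p = fun j => if (p : ℕ) ≠ L ∧ j = ip p ∧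
            ((kp p = 0) ↔ (((bst : ℕ) + 1) * sblk m w H (ip p) ≤ kp p)) then (1 : ZMod 2)
            else 0 := by rw [hσdef]
        rw [hσp]
        exact hammingNorm_ite_le (ip p) _ (fun j hj => hj.2.1)
      calc ∑ p ∈ SS, hammingNorm (σ p) ≤ ∑ p ∈ SS, 1 := Finset.sum_le_sum hb1
        _ = SS.card := by simp
    by_cases hc : (∑ p ∈ SS, ε p) = 0
    · have hxy : x = fun j => ∑ p ∈ SS, σ p j := by
        funext j; rw [hxj j, hc, add_zero]
      refine le_trans (min_le_left _ _) ?_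
      rw [hxy]
      exact le_trans hy (by omega)
    · have hc1 : (∑ p ∈ SS, ε p) = 1 := zmod2_eq_one_of_ne_zero hc
      have hcompl : hammingNorm (fun j => x j + 1) ≤ hammingNorm e_s := by
        have heq2 : (fun j => x j + 1) = fun j => ∑ p ∈ SS, σ p j := by
          funext j
          rw [hxj j, hc1, add_assoc]
          rw [show (1 : ZMod 2) + 1 = 0 by decide, add_zero]
        rw [heq2]
        exact hy
      have hcpl := hammingNorm_compl x
      rw [hcpl] at hcompl
      exact le_trans (min_le_right _ _) (by omega)
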